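/- Two words u, v ∈ 𝒜_n^* lie in the same connected component of the quasi-crystal graph Γ(hypo_n) if and only if std(u) = std(v) (equivalently, if and only if u and v have the same recording ribbon under the Krob–Thibon insertion algorithm). -/

import Mathlib

/-!
Common setup: words over the alphabet `𝒜_n = {1,…,n}` (modelled as `List ℕ`),
quasi-Kashiwara operators, the quasi-crystal graph, Kashiwara operators,
quasi-ribbon words, and the hypoplactic congruence.
-/

namespace HypoCrystal

noncomputable section
open scoped Classical

/-- `u` is a word over the alphabet `𝒜_n = {1,…,n}`. -/
def IsWord (n : ℕ) (u : List ℕ) : Prop := ∀ a ∈ u, 1 ≤ a ∧ a ≤ n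

/-- `u` has an `i`-inversion: some letter `i+1` occurs strictly to the left of some letter `i`. -/
def HasInv (i : ℕ) (u : List ℕ) : Prop :=
  ∃ v w x : List ℕ, u = v ++ (i + 1) :: w ++ i :: x

/-- Replace the first (leftmost) occurrence of `a` by `b`, if any; otherwise `none`. -/
def replaceFirst (a b : ℕ) : List ℕ → Option (List ℕ)
  | [] => none
  | x :: xs => if x = a then some (b :: xs) else (replaceFirst a b xs).map (x :: ·)

/-- The quasi-Kashiwara raising operator `e_i` (partial map, `none` = undefined):
if `u` has an `i`-inversion it is undefined; otherwise it replaces the leftmost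
letter `i+1` by `i` (undefined if there is no letter `i+1`). -/
def qe (i : ℕ) (u : List ℕ) : Option (List ℕ) :=
  if HasInv i u then none else replaceFirst (i + 1) i u

/-- The quasi-Kashiwara lowering operator `f_i` (partial map, `none` = undefined):
if `u` has an `i`-inversion it is undefined; otherwise it replaces the rightmost
letter `i` by `i+1` (undefined if there is no letter `i`). -/
def qf (i : ℕ) (u : List ℕ) : Option (List ℕ) :=
  if HasInv i u then none else (replaceFirst i (i + 1) u.reverse).map List.reverse

/-- Weight of a word: `wt u a` is the number of occurrences of the letter `a` in `u`. -/
def wt (u : List ℕ) : ℕ → ℕ := fun a => u.count a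

/-- There is an edge labelled `i` from `u` to `v` in the quasi-crystal graph `Γ(hypo_n)`. -/
def Edge (n i : ℕ) (u v : List ℕ) : Prop := 1 ≤ i ∧ i < n ∧ qf i u = some v

/-- `u` and `v` are adjacent (in the underlying undirected graph) in `Γ(hypo_n)`. -/
def Adj (n : ℕ) (u v : List ℕ) : Prop := ∃ i, Edge n i u v ∨ Edge n i v u

/-- `v` lies in the connected component `Γ(hypo_n, u)` of `u` in the quasi-crystal graph. -/
def SameComp (n : ℕ) : List ℕ → List ℕ → Prop := Relation.ReflTransGen (Adj n)

/-- `u` is a highest-weight word: no raising operator `e_i` is defined on `u`. -/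
def HighestWeight (n : ℕ) (u : List ℕ) : Prop := ∀ i, 1 ≤ i → i < n → qe i u = none

/-- `θ` is a quasi-crystal isomorphism from the component of `u` onto the component of `v`:
a weight-preserving bijection preserving labelled edges in both directions. -/
def IsQCIso (n : ℕ) (u v : List ℕ) (θ : List ℕ → List ℕ) : Prop :=
  Set.BijOn θ {x | SameComp n u x} {y | SameComp n v y} ∧
  (∀ x, SameComp n u x → wt (θ x) = wt x) ∧
  (∀ x y, SameComp n u x → SameComp n u y → ∀ i, (Edge n i x y ↔ Edge n i (θ x) (θ y)))

/-- `u ∼ v`: there is a quasi-crystal isomorphism between the components of `u` and `v`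
taking `u` to `v`. -/
def Sim (n : ℕ) (u v : List ℕ) : Prop :=
  ∃ θ : List ℕ → List ℕ, IsQCIso n u v θ ∧ θ u = v

/-- The standardization of `u`: position `k` receives the rank (starting at 1) of the
pair `(u_k, k)` among all pairs `(u_l, l)` ordered lexicographically. -/
def std (u : List ℕ) : List ℕ :=
  (List.range u.length).map fun k =>
    1 + ((List.range u.length).filter fun l =>
      u.getD l 0 < u.getD k 0 ∨ (u.getD l 0 = u.getD k 0 ∧ l < k)).length

/-- The maximal strictly decreasing factors of a word (the columns of its
quasi-ribbon tabloid, each read bottom-to-top). -/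
def decFactors : List ℕ → List (List ℕ)
  | [] => []
  | a :: rest =>
    match decFactors rest with
    | (b :: f) :: fs => if b < a then (a :: b :: f) :: fs else [a] :: (b :: f) :: fs
    | l => [a] :: l

/-- `w` is a quasi-ribbon word: its quasi-ribbon tabloid is a quasi-ribbon tableau,
i.e. the bottom entry of each column is ≤ the top entry of the next column. -/
def IsQRWord (w : List ℕ) : Prop :=
  (decFactors w).Chain' fun c d => c.headD 0 ≤ d.getLastD 0

/-- Row lengths (top to bottom) of the ribbon diagram whose column heights
(left to right) are given. -/
def rowLengths : List ℕ → List ℕ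
  | [] => []
  | [d] => List.replicate d 1
  | d :: e :: rest =>
    List.replicate (d - 1) 1 ++
      (match rowLengths (e :: rest) with
       | [] => [1]
       | r :: rs => (r + 1) :: rs)

/-- The shape (as a composition, listed top row first) of the quasi-ribbon tabloid of `w`. -/
def shape (w : List ℕ) : List ℕ := rowLengths ((decFactors w).map List.length)

/-- Columns of the quasi-ribbon tableau of shape `α` whose `j`-th row consists
entirely of symbols `j`, where rows are labelled starting from `j₀`. -/
def hwCols : List ℕ → ℕ → List (List ℕ)
  | [], _ => []
  | [a], j => List.replicate a [j]
  | a :: b :: rest, j =>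
    List.replicate (a - 1) [j] ++
      (match hwCols (b :: rest) (j + 1) with
       | [] => [[j]]
       | c :: cs => (c ++ [j]) :: cs)

/-- The column reading of the quasi-ribbon tableau of shape `α` whose `j`-th row
consists entirely of symbols `j`. -/
def hwQR (α : List ℕ) : List ℕ := (hwCols α 1).flatten

/-- The defining relations `R_hypo` of the hypoplactic monoid of rank `n`. -/
inductive HypoRel (n : ℕ) : List ℕ → List ℕ → Prop
  | knuth1 {a b c : ℕ} : 1 ≤ a → a ≤ b → b < c → c ≤ n → HypoRel n [a, c, b] [c, a, b]
  | knuth2 {a b c : ℕ} : 1 ≤ a → a < b → b ≤ c → c ≤ n → HypoRel n [b, a, c] [b, c, a]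
  | quasi1 {a b c d : ℕ} : 1 ≤ a → a ≤ b → b < c → c ≤ d → d ≤ n →
      HypoRel n [c, a, d, b] [a, c, b, d]
  | quasi2 {a b c d : ℕ} : 1 ≤ a → a < b → b ≤ c → c < d → d ≤ n →
      HypoRel n [b, d, a, c] [d, b, c, a]

/-- The hypoplactic congruence `≡_hypo`: the congruence on the free monoid generated
by the relations `R_hypo`. -/
inductive HypoCong (n : ℕ) : List ℕ → List ℕ → Prop
  | of {u v} : HypoRel n u v → HypoCong n u v
  | refl (u) : HypoCong n u u
  | symm {u v} : HypoCong n u v → HypoCong n v u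
  | trans {u v w} : HypoCong n u v → HypoCong n v w → HypoCong n u w
  | append {u v u' v'} : HypoCong n u v → HypoCong n u' v' →
      HypoCong n (u ++ u') (v ++ v')

/-- The signature word of `u` for index `i`: each letter `i` becomes `(position, true)`
(that is, `+`) and each letter `i+1` becomes `(position, false)` (that is, `−`). -/
def signWord (i : ℕ) (u : List ℕ) : List (ℕ × Bool) :=
  (u.zipIdx.map Prod.swap).filterMap fun pa =>
    if pa.2 = i then some (pa.1, true)
    else if pa.2 = i + 1 then some (pa.1, false) else none

/-- Iteratively delete factors `−+` from a signature word, producing the reduced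
word `+^p −^q`. -/
def reduce : List (ℕ × Bool) → List (ℕ × Bool)
  | [] => []
  | x :: rest =>
    match reduce rest with
    | y :: rest' => if x.2 = false ∧ y.2 = true then rest' else x :: y :: rest'
    | [] => [x]

/-- The Kashiwara raising operator `ẽ_i`, computed by the signature rule: change to `i`
the letter `i+1` corresponding to the leftmost `−` of the reduced signature word. -/
def KE (i : ℕ) (u : List ℕ) : Option (List ℕ) :=
  (((reduce (signWord i u)).filter fun x => !x.2).head?).map fun x => u.set x.1 i

/-- The Kashiwara lowering operator `f̃_i`, computed by the signature rule: change to `i+1`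
the letter `i` corresponding to the rightmost `+` of the reduced signature word. -/
def KF (i : ℕ) (u : List ℕ) : Option (List ℕ) :=
  (((reduce (signWord i u)).filter fun x => x.2).getLast?).map fun x => u.set x.1 (i + 1)

/-- The Schützenberger involution on `𝒜_n^*`: reverse the word and replace each
letter `a` by `n − a + 1`. -/
def sharp (n : ℕ) (u : List ℕ) : List ℕ := u.reverse.map fun a => n + 1 - a

/-- The largest letter occurring in `u` (0 for the empty word). -/
def maxLetter (u : List ℕ) : ℕ := u.foldr max 0

/-- `β` is coarser than `α` (`β ⪯ α`): they have the same weight and every proper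
partial sum of `β` is a proper partial sum of `α`. -/
def Coarser (β α : List ℕ) : Prop :=
  β.sum = α.sum ∧ ∀ p < β.length, ∃ m < α.length, (β.take p).sum = (α.take m).sum

end
end HypoCrystal

namespace HypoCrystal

noncomputable section
open scoped Classical

/-! ### Auxiliary -/

lemma getD_mem {w : List ℕ} {l : ℕ} (h : l < w.length) : w.getD l 0 ∈ w := by
  rw [List.getD_eq_getElem _ _ h]; exact List.getElem_mem _

lemma getD_split (x y : List ℕ) (c l : ℕ) :
    (x ++ c :: y).getD l 0 =
      if l < x.length then x.getD l 0
      else if l = x.length then c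
      else y.getD (l - (x.length + 1)) 0 := by
  split_ifs with h1 h2
  · rw [List.getD_append _ _ _ _ h1]
  · subst h2; rw [List.getD_append_right _ _ _ _ (le_refl _), Nat.sub_self]; rfl
  · rw [List.getD_append_right _ _ _ _ (by omega)]
    have h3 : l - x.length = (l - (x.length + 1)) + 1 := by omega
    rw [h3]; rfl

lemma len_split (x y : List ℕ) (c : ℕ) :
    (x ++ c :: y).length = x.length + 1 + y.length := by simp; omega

/-- predicate used by `std` -/
def pr (u : List ℕ) (k l : ℕ) : Prop :=
  u.getD l 0 < u.getD k 0 ∨ (u.getD l 0 = u.getD k 0 ∧ l < k)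

def rk (u : List ℕ) (k : ℕ) : ℕ :=
  ((List.range u.length).filter fun l => decide (pr u k l)).length

lemma std_eq_map (u : List ℕ) :
    std u = (List.range u.length).map fun k => 1 + rk u k := by
  unfold std rk
  apply List.map_congr_left
  intro k _
  congr 1
  apply congrArg
  apply List.filter_congr
  intro l _
  rw [decide_eq_decide]
  rw [pr]

lemma length_std (u : List ℕ) : (std u).length = u.length := by simp [std]

/-! ### filter-length counting -/

lemma filter_le (p q : ℕ → Bool) (l : List ℕ) (h : ∀ x ∈ l, p x = true → q x = true) :
    (l.filter p).length ≤ (l.filter q).length := by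
  induction l with
  | nil => simp
  | cons a t ih =>
    have ih' := ih (fun x hx => h x (List.mem_cons_of_mem _ hx))
    rw [List.filter_cons, List.filter_cons]
    by_cases hpa : p a = true
    · rw [if_pos hpa, if_pos (h a (List.mem_cons_self) hpa)]
      simpa using ih'
    · rw [if_neg hpa]
      split_ifs with hqa
      · exact le_trans ih' (by simp)
      · exact ih'

lemma filter_lt (p q : ℕ → Bool) (l : List ℕ) (h : ∀ x ∈ l, p x = true → q x = true)
    (x0 : ℕ) (hx0 : x0 ∈ l) (hp : ¬ p x0 = true) (hq : q x0 = true) :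
    (l.filter p).length < (l.filter q).length := by
  induction l with
  | nil => simp at hx0
  | cons a t ih =>
    have hle : (t.filter p).length ≤ (t.filter q).length :=
      filter_le p q t (fun x hx => h x (List.mem_cons_of_mem _ hx))
    rw [List.filter_cons, List.filter_cons]
    by_cases hpa : p a = true
    · have hqa := h a (List.mem_cons_self) hpa
      rw [if_pos hpa, if_pos hqa]
      have hx0t : x0 ∈ t := by
        rcases List.mem_cons.1 hx0 with rfl | hh
        · exact absurd hpa hp
        · exact hh
      have := ih (fun x hx => h x (List.mem_cons_of_mem _ hx)) hx0t
      simpa using this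
    · rw [if_neg hpa]
      split_ifs with hqa
      · simpa using Nat.lt_succ_of_le hle
      · have hx0t : x0 ∈ t := by
          rcases List.mem_cons.1 hx0 with rfl | hh
          · exact absurd hq hqa
          · exact hh
        exact ih (fun x hx => h x (List.mem_cons_of_mem _ hx)) hx0t

/-! ### rank lemmas -/

lemma pr_irrefl (u : List ℕ) (k : ℕ) : ¬ pr u k k := by unfold pr; omega

lemma pr_total {u : List ℕ} {k l : ℕ} (h : l ≠ k) : pr u k l ∨ pr u l k := by
  unfold pr; omega

lemma rk_lt {u : List ℕ} {k l : ℕ} (hk : k < u.length) (hl : l < u.length)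
    (h : pr u k l) : rk u l < rk u k := by
  unfold rk
  apply filter_lt _ _ _ _ l (List.mem_range.2 hl)
  · simp [pr_irrefl]
  · simpa using h
  · intro x _ hx
    simp only [decide_eq_true_eq] at hx ⊢
    unfold pr at hx h ⊢
    omega

lemma std_eq_len {u v : List ℕ} (h : std u = std v) : u.length = v.length := by
  have := congrArg List.length h
  simpa [length_std] using this

lemma std_eq_rk {u v : List ℕ} (h : std u = std v) {k : ℕ} (hk : k < u.length) :
    rk u k = rk v k := by
  have hlen := std_eq_len h
  rw [std_eq_map, std_eq_map] at h
  have h1 : (1 : ℕ) + rk u k = 1 + rk v k := by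
    have e1 : ((List.range u.length).map fun j => 1 + rk u j)[k]'(by simpa using hk)
        = 1 + rk u k := by simp
    have e2 : ((List.range v.length).map fun j => 1 + rk v j)[k]'(by simp; omega)
        = 1 + rk v k := by simp
    rw [← e1, ← e2]
    congr 1
  omega

lemma pr_transfer {u v : List ℕ} (h : std u = std v) {k l : ℕ}
    (hk : k < u.length) (hl : l < u.length) (hp : pr u k l) : pr v k l := by
  have hlen := std_eq_len h
  have hne : l ≠ k := by intro e; subst e; exact pr_irrefl u l hp
  have h1 : rk v l < rk v k := by
    rw [← std_eq_rk h hl, ← std_eq_rk h hk]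
    exact rk_lt hk hl hp
  rcases pr_total (u := v) hne with hgood | hbad
  · exact hgood
  · exact absurd (rk_lt (hlen ▸ hl) (hlen ▸ hk) hbad) (by omega)

/-! ### Step relation -/

/-- `v` is obtained from `u` by replacing the rightmost `i` (with no `i+1` to its left
and no `i` to its right) by `i+1`. -/
def Step (i : ℕ) (u v : List ℕ) : Prop :=
  ∃ x y : List ℕ, u = x ++ i :: y ∧ v = x ++ (i + 1) :: y ∧ (i + 1) ∉ x ∧ i ∉ y

lemma split_at {u : List ℕ} {p : ℕ} (h : p < u.length) :
    u = u.take p ++ u.getD p 0 :: u.drop (p + 1) := by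
  rw [List.getD_eq_getElem _ _ h]
  conv_lhs => rw [← List.take_append_drop p u]
  congr 1
  exact List.drop_eq_getElem_cons h

lemma hasInv_pos {i : ℕ} {u : List ℕ} (h : HasInv i u) :
    ∃ l1 l2, l1 < l2 ∧ l2 < u.length ∧ u.getD l1 0 = i + 1 ∧ u.getD l2 0 = i := by
  obtain ⟨a, b, c, rfl⟩ := h
  have e := len_split a b (i + 1)
  refine ⟨a.length, a.length + 1 + b.length, by omega, ?_, ?_, ?_⟩
  · rw [len_split, e]; omega
  · rw [getD_split, if_pos (by rw [e]; omega), getD_split, if_neg (lt_irrefl _), if_pos rfl]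
  · rw [getD_split, e, if_neg (lt_irrefl _), if_pos rfl]

lemma hasInv_of_pos {i : ℕ} {u : List ℕ} {l1 l2 : ℕ} (h12 : l1 < l2) (h2 : l2 < u.length)
    (e1 : u.getD l1 0 = i + 1) (e2 : u.getD l2 0 = i) : HasInv i u := by
  have h1 : u = u.take l1 ++ (i + 1) :: u.drop (l1 + 1) := by
    rw [← e1]; exact split_at (by omega)
  have hlt : l2 - (l1 + 1) < (u.drop (l1 + 1)).length := by
    rw [List.length_drop]; omega
  have hg : (u.drop (l1 + 1)).getD (l2 - (l1 + 1)) 0 = i := by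
    rw [List.getD_eq_getElem _ _ hlt, List.getElem_drop,
      ← List.getD_eq_getElem _ 0 (by omega : l1 + 1 + (l2 - (l1 + 1)) < u.length),
      show l1 + 1 + (l2 - (l1 + 1)) = l2 from by omega]
    exact e2
  have h2' : u.drop (l1 + 1) = (u.drop (l1 + 1)).take (l2 - (l1 + 1)) ++
      i :: (u.drop (l1 + 1)).drop (l2 - (l1 + 1) + 1) := by
    rw [← hg]; exact split_at hlt
  refine ⟨u.take l1, (u.drop (l1 + 1)).take (l2 - (l1 + 1)),
    (u.drop (l1 + 1)).drop (l2 - (l1 + 1) + 1), ?_⟩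
  conv_lhs => rw [h1, h2']
  simp

lemma not_hasInv_low {i : ℕ} {x y : List ℕ} (hx : (i + 1) ∉ x) (hy : i ∉ y) :
    ¬ HasInv i (x ++ i :: y) := by
  intro h
  obtain ⟨l1, l2, h12, h2, e1, e2⟩ := hasInv_pos h
  rw [len_split] at h2
  rw [getD_split] at e1 e2
  by_cases c1 : l1 < x.length
  · rw [if_pos c1] at e1
    exact hx (e1 ▸ getD_mem c1)
  · by_cases c1' : l1 = x.length
    · rw [if_neg c1, if_pos c1'] at e1; omega
    · rw [if_neg (by omega), if_neg (by omega)] at e2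
      exact hy (e2 ▸ getD_mem (by omega : l2 - (x.length + 1) < y.length))

lemma not_hasInv_high {i : ℕ} {x y : List ℕ} (hx : (i + 1) ∉ x) (hy : i ∉ y) :
    ¬ HasInv i (x ++ (i + 1) :: y) := by
  intro h
  obtain ⟨l1, l2, h12, h2, e1, e2⟩ := hasInv_pos h
  rw [len_split] at h2
  rw [getD_split] at e1 e2
  by_cases c2 : l2 < x.length
  · rw [if_pos (by omega : l1 < x.length)] at e1
    exact hx (e1 ▸ getD_mem (by omega : l1 < x.length))
  · by_cases c2' : l2 = x.length
    · rw [if_neg c2, if_pos c2'] at e2; omega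
    · rw [if_neg (by omega), if_neg (by omega)] at e2
      exact hy (e2 ▸ getD_mem (by omega : l2 - (x.length + 1) < y.length))

lemma replaceFirst_eq_some_iff {a b : ℕ} {u v : List ℕ} :
    replaceFirst a b u = some v ↔ ∃ x y, u = x ++ a :: y ∧ a ∉ x ∧ v = x ++ b :: y := by
  induction u generalizing v with
  | nil =>
    simp only [replaceFirst]
    constructor
    · intro h; cases h
    · rintro ⟨x, y, h, -, -⟩; exact absurd h (by simp)
  | cons c t ih =>
    by_cases hc : c = a
    · subst hc
      rw [show replaceFirst c b (c :: t) = some (b :: t) from by simp [replaceFirst]]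
      constructor
      · rintro h
        injection h with h
        exact ⟨[], t, by simp, by simp, by simp [← h]⟩
      · rintro ⟨x, y, h1, h2, h3⟩
        cases x with
        | nil =>
          simp only [List.nil_append, List.cons.injEq, true_and] at h1
          simp [h3, h1]
        | cons d x' =>
          simp only [List.cons_append, List.cons.injEq] at h1
          exact absurd (show c ∈ d :: x' from by rw [h1.1]; exact List.mem_cons_self) h2
    · rw [show replaceFirst a b (c :: t) = (replaceFirst a b t).map (c :: ·) from by
        simp [replaceFirst, hc]]
      rw [Option.map_eq_some_iff]
      constructor
      · rintro ⟨w, hw, rfl⟩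
        obtain ⟨x, y, h1, h2, h3⟩ := ih.1 hw
        refine ⟨c :: x, y, by simp [h1], ?_, by simp [h3]⟩
        intro hm
        rcases List.mem_cons.1 hm with h | h
        · exact hc h.symm
        · exact h2 h
      · rintro ⟨x, y, h1, h2, h3⟩
        cases x with
        | nil => simp at h1; exact absurd h1.1 hc
        | cons d x' =>
          simp only [List.cons_append, List.cons.injEq] at h1
          refine ⟨x' ++ b :: y, ih.2 ⟨x', y, h1.2, fun hm => h2 (by simp [hm]), rfl⟩, ?_⟩
          rw [h3, h1.1]
          simp

lemma replaceFirst_isSome {a b : ℕ} {u : List ℕ} (h : a ∈ u) :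
    ∃ v, replaceFirst a b u = some v := by
  induction u with
  | nil => simp at h
  | cons c t ih =>
    by_cases hc : c = a
    · exact ⟨b :: t, by simp [replaceFirst, hc]⟩
    · obtain ⟨w, hw⟩ := ih (by
        rcases List.mem_cons.1 h with h' | h'
        · exact absurd h'.symm hc
        · exact h')
      exact ⟨c :: w, by simp [replaceFirst, hc, hw]⟩

lemma qf_eq_some_iff {i : ℕ} {u v : List ℕ} : qf i u = some v ↔ Step i u v := by
  unfold qf
  constructor
  · intro h
    by_cases hinv : HasInv i u
    · rw [if_pos hinv] at h; cases h
    · rw [if_neg hinv, Option.map_eq_some_iff] at h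
      obtain ⟨w, hw, rfl⟩ := h
      obtain ⟨x, y, h1, h2, h3⟩ := replaceFirst_eq_some_iff.1 hw
      have hu : u = y.reverse ++ i :: x.reverse := by
        have h4 := congrArg List.reverse h1
        simp only [List.reverse_reverse] at h4
        rw [h4]; simp
      have hw' : w.reverse = y.reverse ++ (i + 1) :: x.reverse := by
        rw [h3]; simp
      refine ⟨y.reverse, x.reverse, hu, hw', ?_, by simpa using h2⟩
      intro hmem
      obtain ⟨s, t, hst⟩ := List.append_of_mem hmem
      exact hinv ⟨s, t, x.reverse, by rw [hu, hst]⟩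
  · rintro ⟨x, y, rfl, rfl, hx, hy⟩
    rw [if_neg (not_hasInv_low hx hy)]
    rw [show replaceFirst i (i + 1) (x ++ i :: y).reverse
        = some (y.reverse ++ (i + 1) :: x.reverse) from
      replaceFirst_eq_some_iff.2 ⟨y.reverse, x.reverse, by simp, by simpa using hy, rfl⟩]
    simp

lemma qe_eq_some_iff {i : ℕ} {u v : List ℕ} : qe i u = some v ↔ Step i v u := by
  unfold qe
  constructor
  · intro h
    by_cases hinv : HasInv i u
    · rw [if_pos hinv] at h; cases h
    · rw [if_neg hinv] at h
      obtain ⟨x, y, h1, h2, h3⟩ := replaceFirst_eq_some_iff.1 h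
      refine ⟨x, y, h3, h1, h2, ?_⟩
      intro hmem
      obtain ⟨s, t, hst⟩ := List.append_of_mem hmem
      refine hinv ⟨x, s, t, ?_⟩
      rw [h1, hst]; simp
  · rintro ⟨x, y, hv, hu, hx, hy⟩
    rw [if_neg (hu ▸ not_hasInv_high hx hy)]
    rw [hu, hv]
    exact replaceFirst_eq_some_iff.2 ⟨x, y, rfl, hx, rfl⟩

/-! ### Steps preserve standardization -/

lemma std_step {i : ℕ} {x y : List ℕ} (hx : (i + 1) ∉ x) (hy : i ∉ y) :
    std (x ++ i :: y) = std (x ++ (i + 1) :: y) := by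
  have hxl : ∀ l, l < x.length → x.getD l 0 ≠ i + 1 := fun l hl h => hx (h ▸ getD_mem hl)
  have hyl : ∀ l, l < y.length → y.getD l 0 ≠ i := fun l hl h => hy (h ▸ getD_mem hl)
  unfold std
  rw [len_split, len_split]
  apply List.map_congr_left
  intro k hk
  rw [List.mem_range] at hk
  congr 1
  apply congrArg
  apply List.filter_congr
  intro l hl
  rw [List.mem_range] at hl
  rw [decide_eq_decide]
  simp only [getD_split]
  by_cases hl1 : l < x.length
  · simp only [if_pos hl1]
    by_cases hk1 : k < x.length
    · simp only [if_pos hk1]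
    · by_cases hk2 : k = x.length
      · simp only [if_neg hk1, if_pos hk2]
        have := hxl l hl1
        omega
      · simp only [if_neg hk1, if_neg hk2]
  · by_cases hl2 : l = x.length
    · simp only [if_neg hl1, if_pos hl2]
      by_cases hk1 : k < x.length
      · simp only [if_pos hk1]
        have := hxl k hk1
        omega
      · by_cases hk2 : k = x.length
        · simp only [if_neg hk1, if_pos hk2]
          omega
        · simp only [if_neg hk1, if_neg hk2]
          have := hyl (k - (x.length + 1)) (by omega)
          omega
    · simp only [if_neg hl1, if_neg hl2]
      have hyv := hyl (l - (x.length + 1)) (by omega)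
      by_cases hk1 : k < x.length
      · simp only [if_pos hk1]
      · by_cases hk2 : k = x.length
        · simp only [if_neg hk1, if_pos hk2]
          omega
        · simp only [if_neg hk1, if_neg hk2]

/-! ### Highest-weight words -/

/-- every letter `a ≥ 2` occurring in `u` takes part in an `(a-1)`-inversion,
i.e. no quasi-Kashiwara raising operator is defined on `u`. -/
def HWp (u : List ℕ) : Prop := ∀ a, 2 ≤ a → a ∈ u → HasInv (a - 1) u

lemma hw_min {n : ℕ} {u : List ℕ} {k : ℕ} (hu : IsWord n u) (hw : HWp u)
    (hk : k < u.length) (hmin : ∀ l, l < u.length → ¬ pr u k l) : u.getD k 0 = 1 := by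
  have hmem : u.getD k 0 ∈ u := getD_mem hk
  have h1 := (hu _ hmem).1
  by_contra hne
  have ha : 2 ≤ u.getD k 0 := by omega
  obtain ⟨l1, l2, h12, h2, e1, e2⟩ := hasInv_pos (hw _ ha hmem)
  exact hmin l2 h2 (by unfold pr; omega)

lemma hw_val {n : ℕ} {u : List ℕ} (hu : IsWord n u) (hw : HWp u) {k j : ℕ}
    (hk : k < u.length) (hj : j < u.length) (hkj : pr u k j)
    (hmax : ∀ l, l < u.length → pr u k l → l = j ∨ pr u j l) :
    u.getD k 0 = u.getD j 0 + (if k < j then 1 else 0) := by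
  have hjk : j ≠ k := by intro h; exact pr_irrefl u k (by rwa [h] at hkj)
  have hkm : u.getD k 0 ∈ u := getD_mem hk
  have hprkj := hkj
  unfold pr at hprkj
  by_contra hne
  by_cases hlt : k < j
  · rw [if_pos hlt] at hne
    have hgt : u.getD j 0 + 1 < u.getD k 0 := by omega
    have ha2 : 2 ≤ u.getD k 0 := by omega
    obtain ⟨l1, l2, h12, h2, e1, e2⟩ := hasInv_pos (hw _ ha2 hkm)
    have hpl2 : pr u k l2 := by unfold pr; omega
    rcases hmax l2 h2 hpl2 with h | h
    · subst h; omega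
    · unfold pr at h; omega
  · rw [if_neg hlt, Nat.add_zero] at hne
    have hgt : u.getD j 0 < u.getD k 0 := by omega
    have hjm := (hu _ (getD_mem hj)).1
    have ha2 : 2 ≤ u.getD k 0 := by omega
    obtain ⟨l1, l2, h12, h2, e1, e2⟩ := hasInv_pos (hw _ ha2 hkm)
    rw [show u.getD k 0 - 1 + 1 = u.getD k 0 from by omega] at e1
    have hpl2 : pr u k l2 := by unfold pr; omega
    have hl2j : l2 ≤ j ∧ u.getD j 0 = u.getD k 0 - 1 := by
      rcases hmax l2 h2 hpl2 with h | h
      · subst h; exact ⟨le_refl _, by omega⟩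
      · unfold pr at h; exact ⟨by omega, by omega⟩
    have hpl1 : pr u k l1 := by
      unfold pr; right; exact ⟨e1, by omega⟩
    rcases hmax l1 (by omega) hpl1 with h | h
    · subst h; omega
    · unfold pr at h; omega

lemma hw_unique {n : ℕ} {u v : List ℕ} (hu : IsWord n u) (hv : IsWord n v)
    (hstd : std u = std v) (hwu : HWp u) (hwv : HWp v) : u = v := by
  have hlen := std_eq_len hstd
  have main : ∀ r k, k < u.length → rk u k ≤ r → u.getD k 0 = v.getD k 0 := by
    intro r
    induction r with
    | zero =>
      intro k hk hr
      have hmin : ∀ l, l < u.length → ¬ pr u k l := by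
        intro l hl hp
        have := rk_lt hk hl hp
        omega
      have hminv : ∀ l, l < v.length → ¬ pr v k l := by
        intro l hl hp
        exact hmin l (by omega) (pr_transfer hstd.symm (by omega) hl hp)
      rw [hw_min hu hwu hk hmin, hw_min hv hwv (by omega) hminv]
    | succ r ih =>
      intro k hk hr
      by_cases hex : ∃ l, l < u.length ∧ pr u k l
      · obtain ⟨j, hj, hkj, hmax⟩ : ∃ j, j < u.length ∧ pr u k j ∧
            ∀ l, l < u.length → pr u k l → l = j ∨ pr u j l := by
          obtain ⟨l0, hl0, hp0⟩ := hex
          have hne : ((Finset.range u.length).filter fun l => pr u k l).Nonempty :=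
            ⟨l0, by simp only [Finset.mem_filter, Finset.mem_range]; exact ⟨hl0, hp0⟩⟩
          obtain ⟨j, hjmem, hjmax⟩ := Finset.exists_max_image _ (rk u) hne
          simp only [Finset.mem_filter, Finset.mem_range] at hjmem
          refine ⟨j, hjmem.1, hjmem.2, ?_⟩
          intro l hl hp
          by_cases hlj : l = j
          · exact Or.inl hlj
          · right
            rcases pr_total (u := u) (k := j) (l := l) hlj with h | h
            · exact h
            · exfalso
              have h1 := rk_lt hl hjmem.1 h
              have h2 := hjmax l (by
                simp only [Finset.mem_filter, Finset.mem_range]; exact ⟨hl, hp⟩)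
              omega
        have hmaxv : ∀ l, l < v.length → pr v k l → l = j ∨ pr v j l := by
          intro l hl hp
          rcases hmax l (by omega) (pr_transfer hstd.symm (by omega) hl hp) with h | h
          · exact Or.inl h
          · exact Or.inr (pr_transfer hstd hj (by omega) h)
        have hju := hw_val hu hwu hk hj hkj hmax
        have hjv := hw_val hv hwv (by omega) (by omega)
          (pr_transfer hstd hk hj hkj) hmaxv
        have hrkj : rk u j ≤ r := by
          have := rk_lt hk hj hkj
          omega
        rw [hju, hjv, ih j hj hrkj]
      · push_neg at hex
        have hminv : ∀ l, l < v.length → ¬ pr v k l := by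
          intro l hl hp
          exact hex l (by omega) (pr_transfer hstd.symm (by omega) hl hp)
        rw [hw_min hu hwu hk hex, hw_min hv hwv (by omega) hminv]
  apply List.ext_getElem hlen
  intro k h1 h2
  have := main (rk u k) k h1 (le_refl _)
  rwa [List.getD_eq_getElem _ _ h1, List.getD_eq_getElem _ _ h2] at this

/-! ### Connectivity -/

lemma isWord_low {n a : ℕ} {x y : List ℕ} (hu : IsWord n (x ++ a :: y)) (ha : 2 ≤ a) :
    IsWord n (x ++ (a - 1) :: y) := by
  intro b hb
  rcases List.mem_append.1 hb with h | h
  · exact hu b (List.mem_append.2 (Or.inl h))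
  · rcases List.mem_cons.1 h with rfl | h
    · have := hu a (List.mem_append.2 (Or.inr (List.mem_cons_self)))
      omega
    · exact hu b (List.mem_append.2 (Or.inr (List.mem_cons_of_mem _ h)))

lemma sum_low {a : ℕ} (x y : List ℕ) (ha : 2 ≤ a) :
    (x ++ a :: y).sum = (x ++ (a - 1) :: y).sum + 1 := by
  simp only [List.sum_append, List.sum_cons]
  omega

lemma exists_down {n : ℕ} {w : List ℕ} (hw : IsWord n w) (h : ¬ HWp w) :
    ∃ i w', 1 ≤ i ∧ i < n ∧ Step i w' w := by
  unfold HWp at h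
  push_neg at h
  obtain ⟨a, ha2, hmem, hninv⟩ := h
  obtain ⟨w', hw'⟩ := replaceFirst_isSome (a := a) (b := a - 1) hmem
  have hqe : qe (a - 1) w = some w' := by
    unfold qe
    rw [if_neg hninv, show a - 1 + 1 = a from by omega]
    exact hw'
  have han := (hw a hmem).2
  exact ⟨a - 1, w', by omega, by omega, qe_eq_some_iff.1 hqe⟩

lemma connect {n : ℕ} : ∀ s u v, IsWord n u → IsWord n v → std u = std v →
    u.sum + v.sum ≤ s → SameComp n u v := by
  intro s
  induction s with
  | zero =>
    intro u v hu hv hstd hs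
    have hu0 : u = [] := by
      cases u with
      | nil => rfl
      | cons a t =>
        have := (hu a (by simp)).1
        simp only [List.sum_cons] at hs
        omega
    have hv0 : v = [] := by
      cases v with
      | nil => rfl
      | cons a t =>
        have := (hv a (by simp)).1
        simp only [List.sum_cons] at hs
        omega
    rw [hu0, hv0]
    exact Relation.ReflTransGen.refl
  | succ s ih =>
    intro u v hu hv hstd hs
    by_cases huv : u = v
    · rw [huv]
      exact Relation.ReflTransGen.refl
    · have hnw : ¬ HWp u ∨ ¬ HWp v := by
        by_contra h
        push_neg at h
        exact huv (hw_unique hu hv hstd h.1 h.2)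
      rcases hnw with h | h
      · obtain ⟨i, u', hi1, hi2, hstep⟩ := exists_down hu h
        obtain ⟨x, y, e1, e2, hx, hy⟩ := hstep
        have hstd' : std u' = std u := by rw [e1, e2]; exact std_step hx hy
        have hiu' : IsWord n u' := by
          rw [e1]
          rw [e2] at hu
          have : i + 1 - 1 = i := by omega
          exact this ▸ isWord_low hu (by omega)
        have hsum : u.sum = u'.sum + 1 := by
          rw [e1, e2]
          have hs' := sum_low x y (a := i + 1) (by omega)
          rw [show i + 1 - 1 = i from by omega] at hs'
          exact hs'
        have hadj : Adj n u u' :=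
          ⟨i, Or.inr ⟨hi1, hi2, qf_eq_some_iff.2 ⟨x, y, e1, e2, hx, hy⟩⟩⟩
        exact Relation.ReflTransGen.head hadj
          (ih u' v hiu' hv (hstd'.trans hstd) (by omega))
      · obtain ⟨i, v', hi1, hi2, hstep⟩ := exists_down hv h
        obtain ⟨x, y, e1, e2, hx, hy⟩ := hstep
        have hstd' : std v' = std v := by rw [e1, e2]; exact std_step hx hy
        have hiv' : IsWord n v' := by
          rw [e1]
          rw [e2] at hv
          have : i + 1 - 1 = i := by omega
          exact this ▸ isWord_low hv (by omega)
        have hsum : v.sum = v'.sum + 1 := by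
          rw [e1, e2]
          have hs' := sum_low x y (a := i + 1) (by omega)
          rw [show i + 1 - 1 = i from by omega] at hs'
          exact hs'
        have hadj : Adj n v' v :=
          ⟨i, Or.inl ⟨hi1, hi2, qf_eq_some_iff.2 ⟨x, y, e1, e2, hx, hy⟩⟩⟩
        exact Relation.ReflTransGen.tail
          (ih u v' hu hiv' (hstd.trans hstd'.symm) (by omega)) hadj

lemma adj_std {n : ℕ} {u v : List ℕ} (h : Adj n u v) : std u = std v := by
  obtain ⟨i, h | h⟩ := h
  · obtain ⟨x, y, e1, e2, hx, hy⟩ := qf_eq_some_iff.1 h.2.2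
    rw [e1, e2]
    exact std_step hx hy
  · obtain ⟨x, y, e1, e2, hx, hy⟩ := qf_eq_some_iff.1 h.2.2
    rw [e1, e2]
    exact (std_step hx hy).symm

end

/-- Two words `u, v ∈ 𝒜_n^*` lie in the same connected component of
the quasi-crystal graph `Γ(hypo_n)` if and only if `std(u) = std(v)`. -/
theorem sameComponent_iff_std_eq (n : ℕ) (u v : List ℕ)
    (hu : IsWord n u) (hv : IsWord n v) :
    SameComp n u v ↔ std u = std v := by
  constructor
  · intro h
    have h' : Relation.ReflTransGen (Adj n) u v := h
    clear h hv
    induction h' with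
    | refl => rfl
    | tail hst hadj ih => exact ih.trans (adj_std hadj)
  · intro h
    exact connect (u.sum + v.sum) u v hu hv h (le_refl _)

end HypoCrystal
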